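/- Let R be a noetherian ring, p a prime, and M a finitely generated discrete R-module that is p-power torsion (i.e., annihilated by some power of p). Suppose a finite p-group G acts on M by R-linear automorphisms. Then the support of the fixed-point submodule M^G equals the support of M. -/

import Mathlib

open MulAction

/-- A finite `p`-group acting additively on a nonzero `p`-power-torsion abelian group
has a nonzero fixed point. -/
lemma exists_nonzero_fixed
    {p : ℕ} (hp : p.Prime) {n : ℕ}
    (N : Type*) [AddCommGroup N]
    (htors : ∀ x : N, (p ^ n : ℕ) • x = 0)
    (hN : ∃ x : N, x ≠ 0)
    (G : Type*) [Group G] [Finite G] (hG : ∃ k : ℕ, Nat.card G = p ^ k)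
    (σ : G → N ≃+ N)
    (hone : ∀ x, σ 1 x = x)
    (hmul : ∀ g h x, σ (g * h) x = σ g (σ h x)) :
    ∃ x : N, x ≠ 0 ∧ ∀ g : G, σ g x = x := by
  haveI : Fact p.Prime := ⟨hp⟩
  obtain ⟨y, hy⟩ := hN
  set S : Set N := Set.range (fun g : G => σ g y) with hS
  set A : Submodule ℤ N := Submodule.span ℤ S with hA
  have hyA : y ∈ A := Submodule.subset_span ⟨1, hone y⟩
  have hstab : ∀ g : G, ∀ x ∈ A, σ g x ∈ A := by
    intro g x hx
    have hmap : Submodule.map (σ g).toAddMonoidHom.toIntLinearMap A ≤ A := by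
      rw [hA, Submodule.map_span]
      apply Submodule.span_mono
      rintro _ ⟨_, ⟨h, rfl⟩, rfl⟩
      exact ⟨g * h, by simpa using hmul g h y⟩
    exact hmap ⟨x, hx, rfl⟩
  haveI : Module.Finite ℤ A := Module.Finite.span_of_finite ℤ (Set.finite_range _)
  haveI : Finite A := by
    apply Module.finite_of_fg_torsion
    intro x
    refine ⟨⟨(p ^ n : ℕ), mem_nonZeroDivisors_of_ne_zero (by exact_mod_cast (pow_pos hp.pos n).ne')⟩, ?_⟩
    apply Subtype.ext
    show ((p ^ n : ℕ) : ℤ) • (x : N) = 0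
    rw [natCast_zsmul]
    exact htors x
  letI : MulAction G A :=
    { smul := fun g x => ⟨σ g x, hstab g x x.2⟩
      one_smul := fun x => Subtype.ext (hone x)
      mul_smul := fun g h x => Subtype.ext (hmul g h x) }
  have hGp : IsPGroup p G := IsPGroup.iff_card.mpr hG
  have hmod := hGp.card_modEq_card_fixedPoints (α := A)
  have hAp : IsPGroup p (Multiplicative A) := by
    intro a
    refine ⟨n, ?_⟩
    have h0 : Multiplicative.toAdd (a ^ p ^ n) = 0 := by
      rw [toAdd_pow]
      apply Subtype.ext
      show (p ^ n : ℕ) • ((Multiplicative.toAdd a : A) : N) = 0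
      exact htors _
    exact h0
  obtain ⟨k, hk⟩ := IsPGroup.iff_card.mp hAp
  have hcardA : Nat.card A = p ^ k := by
    rw [← hk]; exact Nat.card_congr Multiplicative.ofAdd
  haveI : Nontrivial A := ⟨⟨⟨y, hyA⟩, 0, by
    intro h; exact hy (by simpa using congrArg Subtype.val h)⟩⟩
  have h1lt : 1 < Nat.card A := Finite.one_lt_card_iff_nontrivial.mpr inferInstance
  have hk0 : k ≠ 0 := by
    rintro rfl; rw [hcardA] at h1lt; simp at h1lt
  have hpA : p ∣ Nat.card A := hcardA ▸ dvd_pow_self p hk0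
  have hfix0 : (0 : A) ∈ fixedPoints G A := by
    intro g; exact Subtype.ext ((σ g).map_zero)
  haveI : Nonempty (fixedPoints G A) := ⟨⟨0, hfix0⟩⟩
  have hpos : 0 < Nat.card (fixedPoints G A) := Nat.card_pos
  have hdvd : p ∣ Nat.card (fixedPoints G A) :=
    Nat.modEq_zero_iff_dvd.mp (hmod.symm.trans (Nat.modEq_zero_iff_dvd.mpr hpA))
  have h2 : 1 < Nat.card (fixedPoints G A) :=
    lt_of_lt_of_le hp.one_lt (Nat.le_of_dvd hpos hdvd)
  haveI : Nontrivial (fixedPoints G A) := Finite.one_lt_card_iff_nontrivial.mp h2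
  obtain ⟨z, hz⟩ := exists_ne (⟨0, hfix0⟩ : fixedPoints G A)
  refine ⟨((z : A) : N), ?_, ?_⟩
  · intro h
    exact hz (Subtype.ext (Subtype.ext h))
  · intro g
    have hzg : g • (z : A) = (z : A) := z.2 g
    exact congrArg Subtype.val hzg

/-- For a noetherian ring `R`, a finitely generated `p`-power torsion `R`-module
`M` with an `R`-linear action of a finite `p`-group `G`, the support of the fixed-point
submodule `M^G` equals the support of `M`. -/
theorem support_fixedPoints_eq_support
    (R : Type) [CommRing R] [IsNoetherianRing R]
    (p : ℕ) (hp : p.Prime)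
    (M : Type) [AddCommGroup M] [Module R M] [Module.Finite R M]
    (htors : ∃ n : ℕ, ∀ m : M, (p ^ n : ℕ) • m = 0)
    (G : Type) [Group G] [Finite G] (hG : ∃ k : ℕ, Nat.card G = p ^ k)
    (ρ : G →* (M ≃ₗ[R] M)) :
    Module.support R
      (↥(⨅ g : G, LinearMap.ker ((ρ g).toLinearMap - LinearMap.id))) =
    Module.support R M := by
  classical
  obtain ⟨n, htors⟩ := htors
  set F := ⨅ g : G, LinearMap.ker ((ρ g).toLinearMap - LinearMap.id) with hF
  have hFmem : ∀ x : M, x ∈ F ↔ ∀ g : G, ρ g x = x := by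
    intro x
    simp [hF, Submodule.mem_iInf, LinearMap.mem_ker, LinearMap.sub_apply, sub_eq_zero]
  haveI : Module.Finite R F := Module.Finite.iff_fg.mpr (IsNoetherian.noetherian F)
  rw [Module.support_eq_zeroLocus, Module.support_eq_zeroLocus]
  have hle : Module.annihilator R M ≤ Module.annihilator R F := by
    intro a ha
    rw [Module.mem_annihilator] at ha ⊢
    intro m
    exact Subtype.ext (ha (m : M))
  have key : ∀ a ∈ Module.annihilator R F, ∃ k : ℕ, a ^ k ∈ Module.annihilator R M := by
    intro a ha
    rw [Module.mem_annihilator] at ha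
    set f : ℕ →o Submodule R M :=
      ⟨fun k => LinearMap.ker ((a ^ k) • (LinearMap.id : M →ₗ[R] M)), by
        intro i j hij x hx
        simp only [LinearMap.mem_ker, LinearMap.smul_apply, LinearMap.id_apply] at hx ⊢
        obtain ⟨c, hc⟩ := pow_dvd_pow a hij
        rw [hc, mul_comm, mul_smul, hx, smul_zero]⟩ with hf
    obtain ⟨K, hK⟩ := monotone_stabilizes_iff_noetherian.mpr (inferInstance : IsNoetherian R M) f
    refine ⟨K, ?_⟩
    rw [Module.mem_annihilator]
    by_contra hcon
    push_neg at hcon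
    obtain ⟨m0, hm0⟩ := hcon
    set T := f K with hT
    have hTmem : ∀ x : M, x ∈ T ↔ a ^ K • x = 0 := by
      intro x
      show x ∈ LinearMap.ker ((a ^ K) • (LinearMap.id : M →ₗ[R] M)) ↔ _
      simp [hT, hf, LinearMap.mem_ker]
    have hTstab : ∀ g : G, Submodule.map (ρ g : M ≃ₗ[R] M).toLinearMap T = T := by
      intro g
      ext x
      rw [show ((ρ g : M ≃ₗ[R] M).toLinearMap : M →ₗ[R] M) = ((ρ g : M ≃ₗ[R] M) : M →ₗ[R] M) from rfl]
      rw [Submodule.mem_map_equiv, hTmem, hTmem]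
      constructor
      · intro h
        have := congrArg (ρ g) h
        rw [map_smul, (ρ g).apply_symm_apply, map_zero] at this
        exact this
      · intro h
        rw [← map_smul, h, map_zero]
    set σ : G → (M ⧸ T) ≃+ (M ⧸ T) :=
      fun g => (Submodule.Quotient.equiv T T (ρ g) (hTstab g)).toAddEquiv with hσ
    have hσmk : ∀ g (x : M), σ g (Submodule.Quotient.mk x) = Submodule.Quotient.mk (ρ g x) := by
      intro g x
      simp only [hσ, Submodule.Quotient.equiv, LinearEquiv.coe_toAddEquiv,
        LinearEquiv.coe_mk, Submodule.mapQ_apply, LinearEquiv.coe_coe]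
      rfl
    obtain ⟨xbar, hxbar0, hxbarfix⟩ :=
      exists_nonzero_fixed hp (M ⧸ T)
        (by
          intro x
          obtain ⟨m, rfl⟩ := Submodule.Quotient.mk_surjective T x
          rw [show ((p ^ n : ℕ) • (Submodule.Quotient.mk m : M ⧸ T)) =
            Submodule.Quotient.mk ((p ^ n : ℕ) • m) from rfl, htors m]
          rfl)
        ⟨Submodule.Quotient.mk m0, by
          rw [ne_eq, Submodule.Quotient.mk_eq_zero, hTmem]; exact hm0⟩
        G hG σ
        (by intro x
            obtain ⟨m, rfl⟩ := Submodule.Quotient.mk_surjective T x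
            rw [hσmk, map_one]; rfl)
        (by intro g h x
            obtain ⟨m, rfl⟩ := Submodule.Quotient.mk_surjective T x
            rw [hσmk, hσmk, hσmk, map_mul]; rfl)
    obtain ⟨x, rfl⟩ := Submodule.Quotient.mk_surjective T xbar
    have hdiff : ∀ g : G, a ^ K • ((ρ g) x - x) = 0 := by
      intro g
      have : (Submodule.Quotient.mk (ρ g x) : M ⧸ T) = Submodule.Quotient.mk x := by
        rw [← hσmk]; exact hxbarfix g
      have hmem : ρ g x - x ∈ T := (Submodule.Quotient.eq T).mp this
      exact (hTmem _).mp hmem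
    have hxF : a ^ K • x ∈ F := by
      rw [hFmem]
      intro g
      rw [map_smul]
      have := hdiff g
      rw [smul_sub, sub_eq_zero] at this
      rw [this]
    have : a • (a ^ K • x) = 0 := congrArg Subtype.val (ha ⟨_, hxF⟩)
    have hx1 : x ∈ f (K + 1) := by
      show x ∈ LinearMap.ker ((a ^ (K + 1)) • (LinearMap.id : M →ₗ[R] M))
      simp only [hf, LinearMap.mem_ker, OrderHom.coe_mk, LinearMap.smul_apply,
        LinearMap.id_apply]
      rw [pow_succ, mul_comm, mul_smul]
      exact this
    rw [← hK (K + 1) (Nat.le_succ K)] at hx1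
    exact hxbar0 ((Submodule.Quotient.mk_eq_zero T).mpr hx1)
  apply subset_antisymm
  · exact PrimeSpectrum.zeroLocus_anti_mono_ideal hle
  · rw [← PrimeSpectrum.zeroLocus_radical (Module.annihilator R M)]
    apply PrimeSpectrum.zeroLocus_anti_mono_ideal
    intro a ha
    obtain ⟨k, hk⟩ := key a ha
    exact ⟨k, hk⟩
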